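/- Let n ≥ 1, represent a cyclic configuration of length n as x : ZMod n → Q, and let δ : (ZMod n → Q) → (ZMod n → Q) be the cyclic transition function of rule 166, (δ x)(m) = (x(m-1) + 1)·x(m) + x(m+1). Then for all natural numbers k and all m ∈ ZMod n, the 2^k-fold iterate satisfies (δ^[2^k] x)(m) = (x(m - 2^k) + 1) · ∏_{j=1}^{2^k} x(m - 2^k + 2j - 1) + x(m + 2^k), where all index arithmetic is taken in ZMod n. -/
import Mathlib


/-- The state set `Q = {0,1}` as `ZMod 2`. -/
abbrev Q : Type := ZMod 2

/-- A triplet local rule `f : Q³ → Q`. -/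
abbrev Rule : Type := Q → Q → Q → Q

/-- A configuration of length `n`. -/
abbrev Config (n : ℕ) : Type := Fin n → Q

/-- The transition sending `x` to the word whose `i`-th letter is
`f (x (i-1)) (x i) (x (i+1))`, where the virtual boundary letters
`x₀` and `x_{n+1}` are given as `x0` and `xn1`. -/
def caTrans {n : ℕ} (f : Rule) (x0 xn1 : Q) (x : Config n) : Config n :=
  fun i =>
    f (if _h : i.1 = 0 then x0
       else x ⟨i.1 - 1, Nat.lt_of_le_of_lt (Nat.sub_le _ _) i.isLt⟩)
      (x i)
      (if h : i.1 + 1 < n then x ⟨i.1 + 1, h⟩ else xn1)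

/-- The first letter `x₁` of a nonempty configuration. -/
def firstCell {n : ℕ} (hn : 0 < n) (x : Config n) : Q := x ⟨0, hn⟩

/-- The last letter `xₙ` of a nonempty configuration. -/
def lastCell {n : ℕ} (hn : 0 < n) (x : Config n) : Q :=
  x ⟨n - 1, Nat.sub_lt hn Nat.one_pos⟩

/-- Fixed boundary `a-b` : `x₀ = a`, `x_{n+1} = b`. -/
def fixedBC {n : ℕ} (f : Rule) (a b : Q) : Config n → Config n :=
  fun x => caTrans f a b x

/-- Boundary `a-*` : `x₀ = a`, `x_{n+1} = xₙ`. -/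
def leftFixedBC {n : ℕ} (hn : 0 < n) (f : Rule) (a : Q) : Config n → Config n :=
  fun x => caTrans f a (lastCell hn x) x

/-- Boundary `*-b` : `x₀ = x₁`, `x_{n+1} = b`. -/
def rightFixedBC {n : ℕ} (hn : 0 < n) (f : Rule) (b : Q) : Config n → Config n :=
  fun x => caTrans f (firstCell hn x) b x

/-- Free boundary `*-*` : `x₀ = x₁`, `x_{n+1} = xₙ`. -/
def freeBC {n : ℕ} (hn : 0 < n) (f : Rule) : Config n → Config n :=
  fun x => caTrans f (firstCell hn x) (lastCell hn x) x

/-- Cyclic boundary `*` : `x₀ = xₙ`, `x_{n+1} = x₁`. -/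
def cyclicBC {n : ℕ} (hn : 0 < n) (f : Rule) : Config n → Config n :=
  fun x => caTrans f (lastCell hn x) (firstCell hn x) x

/-- The cyclic transition function of rule 166 on configurations `ZMod n → Q` :
`(δ x)(m) = (x(m-1) + 1) * x(m) + x(m+1)`. -/
def delta166 {n : ℕ} (x : ZMod n → Q) : ZMod n → Q :=
  fun m => (x (m - 1) + 1) * x m + x (m + 1)


lemma zmod2_cases : ∀ a : ZMod 2, a = 0 ∨ a = 1 := by decide

lemma zmod2_prod_eq_one {α} {s : Finset α} {f : α → ZMod 2}
    (h : ∏ a ∈ s, f a = 1) : ∀ a ∈ s, f a = 1 := by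
  intro a ha
  have h0 : ∏ a ∈ s, f a ≠ 0 := by rw [h]; exact one_ne_zero
  have := Finset.prod_ne_zero_iff.mp h0 a ha
  rcases zmod2_cases (f a) with h1 | h1 <;> simp_all

lemma alg1 : ∀ A b q r : ZMod 2,
    ((A + 1) * 1 + b + 1) * q + ((b + 1) * q + r) = (A + 1) * (1 * q) + r := by decide

lemma alg2 : ∀ A p q r : ZMod 2,
    ((A + 1) * 0 + 1 + 1) * p + ((1 + 1) * q + r) = (A + 1) * (0 * q) + r := by decide

lemma alg3 : ∀ A q r : ZMod 2,
    ((A + 1) * 0 + 0 + 1) * q + ((0 + 1) * q + r) = (A + 1) * (0 * q) + r := by decide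

lemma key (n : ℕ) (N : ℕ) (hN : 1 ≤ N)
    (IH : ∀ (x : ZMod n → ZMod 2) (m : ZMod n),
      (delta166^[N] x) m =
        (x (m - (N : ℕ)) + 1) *
          (∏ j ∈ Finset.Icc 1 N, x (m - (N : ℕ) + ((2 * j - 1 : ℕ) : ZMod n)))
        + x (m + (N : ℕ)))
    (x : ZMod n → ZMod 2) (m : ZMod n) :
    (delta166^[2 * N] x) m =
      (x (m - ((2 * N : ℕ))) + 1) *
        (∏ j ∈ Finset.Icc 1 (2 * N), x (m - ((2 * N : ℕ)) + ((2 * j - 1 : ℕ) : ZMod n)))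
      + x (m + ((2 * N : ℕ))) := by
  have hcast2N : ((2 * N : ℕ) : ZMod n) = (N : ZMod n) + N := by push_cast; ring
  -- odd cast helper
  have hodd : ∀ j : ℕ, 1 ≤ j → ((2 * j - 1 : ℕ) : ZMod n) = 2 * (j : ZMod n) - 1 := by
    intro j hj
    have : 1 ≤ 2 * j := by omega
    push_cast [Nat.cast_sub this]
    ring

  set y := delta166^[N] x with hy
  have hstep : (delta166^[2 * N] x) m = (delta166^[N] y) m := by
    rw [two_mul, Function.iterate_add_apply]
  rw [hstep, IH y m]
  -- abbreviations
  set c : ℕ → ZMod 2 := fun j => x (m - ((2 * N : ℕ)) + ((2 * j - 1 : ℕ) : ZMod n)) with hc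
  set d : ℕ → ZMod 2 := fun j => x (m + ((2 * j - 1 : ℕ) : ZMod n)) with hd
  -- (1) y (m - N)
  have h1 : y (m - (N : ℕ)) = (x (m - ((2 * N : ℕ))) + 1) * (∏ j ∈ Finset.Icc 1 N, c j) + x m := by
    rw [hy, IH x (m - (N : ℕ))]
    have e1 : m - (N : ℕ) - (N : ℕ) = m - ((2 * N : ℕ) : ZMod n) := by rw [hcast2N]; ring
    have e2 : m - (N : ℕ) + (N : ℕ) = m := by ring
    rw [e1, e2]
  set P : ℕ → ZMod 2 := fun j => ∏ i ∈ Finset.Icc 1 N,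
      x (m - ((2 * N : ℕ)) + ((2 * j - 1 : ℕ) : ZMod n) + ((2 * i - 1 : ℕ) : ZMod n)) with hP
  have h2 : ∀ j ∈ Finset.Icc 1 N,
      y (m - (N : ℕ) + ((2 * j - 1 : ℕ) : ZMod n)) = (c j + 1) * P j + d j := by
    intro j hj
    rw [hy, IH x (m - (N : ℕ) + ((2 * j - 1 : ℕ) : ZMod n))]
    have e1 : m - (N : ℕ) + ((2 * j - 1 : ℕ) : ZMod n) - (N : ℕ)
        = m - ((2 * N : ℕ)) + ((2 * j - 1 : ℕ) : ZMod n) := by rw [hcast2N]; ring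
    have e2 : m - (N : ℕ) + ((2 * j - 1 : ℕ) : ZMod n) + (N : ℕ)
        = m + ((2 * j - 1 : ℕ) : ZMod n) := by ring
    rw [e1, e2]
  have h3 : y (m + (N : ℕ)) = (x m + 1) * (∏ j ∈ Finset.Icc 1 N, d j) + x (m + ((2 * N : ℕ))) := by
    rw [hy, IH x (m + (N : ℕ))]
    have e1 : m + (N : ℕ) - (N : ℕ) = m := by ring
    have e2 : m + (N : ℕ) + (N : ℕ) = m + ((2 * N : ℕ) : ZMod n) := by rw [hcast2N]; ring
    rw [e1, e2]
  -- product split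
  have hsplit : ∏ j ∈ Finset.Icc 1 (2 * N), c j
      = (∏ j ∈ Finset.Icc 1 N, c j) * (∏ j ∈ Finset.Icc 1 N, d j) := by
    have htail : ∏ j ∈ Finset.Ioc N (2 * N), c j = ∏ j ∈ Finset.Ioc 0 N, d j := by
      apply Finset.prod_bij' (fun j _ => j - N) (fun j _ => j + N)
      · intro a ha
        simp only [Finset.mem_Ioc] at ha ⊢
        omega
      · intro a ha
        simp only [Finset.mem_Ioc] at ha ⊢
        omega
      · intro a ha
        simp only [Finset.mem_Ioc] at ha
        omega
      · intro a ha
        omega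
      · intro a ha
        simp only [Finset.mem_Ioc] at ha
        simp only [hc, hd]
        have e : (2 * a - 1 : ℕ) = (2 * (a - N) - 1) + 2 * N := by omega
        rw [e]
        push_cast [hcast2N]
        ring_nf
    have hIoc : ∀ k : ℕ, Finset.Ioc 0 k = Finset.Icc 1 k :=
      fun k => (Finset.Icc_add_one_left_eq_Ioc 0 k).symm
    calc ∏ j ∈ Finset.Icc 1 (2 * N), c j
        = ∏ j ∈ Finset.Ioc 0 (2 * N), c j := by rw [hIoc]
      _ = (∏ j ∈ Finset.Ioc 0 N, c j) * (∏ j ∈ Finset.Ioc N (2 * N), c j) := by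
          rw [Finset.prod_Ioc_consecutive _ (Nat.zero_le N) (by omega)]
      _ = (∏ j ∈ Finset.Icc 1 N, c j) * (∏ j ∈ Finset.Icc 1 N, d j) := by
          rw [htail, hIoc]
  -- zero of P when x m = 0
  have hP0 : x m = 0 → ∀ j ∈ Finset.Icc 1 N, P j = 0 := by
    intro h0 j hj
    simp only [Finset.mem_Icc] at hj
    apply Finset.prod_eq_zero (i := N + 1 - j)
    · simp only [Finset.mem_Icc]; omega
    · have e : ((2 * j - 1 : ℕ) : ZMod n) + ((2 * (N + 1 - j) - 1 : ℕ) : ZMod n)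
          = ((2 * N : ℕ) : ZMod n) := by
        rw [← Nat.cast_add]
        congr 1
        omega
      have e2 : m - ((2 * N : ℕ)) + ((2 * j - 1 : ℕ) : ZMod n) + ((2 * (N + 1 - j) - 1 : ℕ) : ZMod n) = m := by
        rw [add_assoc, e]; ring
      rw [e2, h0]
  -- final algebra
  rw [h1, h3, Finset.prod_congr rfl h2, hsplit]
  rcases zmod2_cases (∏ j ∈ Finset.Icc 1 N, c j) with hq1 | hq1
  · -- Q1 = 0
    rw [hq1]
    rcases zmod2_cases (x m) with hxm | hxm
    · -- x m = 0 : all P j = 0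
      have hpd : ∏ j ∈ Finset.Icc 1 N, ((c j + 1) * P j + d j)
          = ∏ j ∈ Finset.Icc 1 N, d j := by
        apply Finset.prod_congr rfl
        intro j hj
        rw [hP0 hxm j hj]
        ring
      rw [hpd, hxm]
      exact alg3 _ _ _
    · rw [hxm]
      exact alg2 _ _ _ _
  · -- Q1 = 1 : all c j = 1
    have hpd : ∏ j ∈ Finset.Icc 1 N, ((c j + 1) * P j + d j)
        = ∏ j ∈ Finset.Icc 1 N, d j := by
      apply Finset.prod_congr rfl
      intro j hj
      rw [zmod2_prod_eq_one hq1 j hj]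
      have h11 : (1 + 1 : ZMod 2) = 0 := by decide
      rw [h11]
      ring
    rw [hpd, hq1]
    exact alg1 _ _ _ _

theorem statement18 (n : ℕ) (hn : 1 ≤ n) (x : ZMod n → Q) (k : ℕ) (m : ZMod n) :
    (delta166^[2 ^ k] x) m =
      (x (m - (2 ^ k : ℕ)) + 1) *
        (∏ j ∈ Finset.Icc 1 (2 ^ k), x (m - (2 ^ k : ℕ) + ((2 * j - 1 : ℕ) : ZMod n)))
      + x (m + (2 ^ k : ℕ)) := by
  induction k generalizing x m with
  | zero =>
    simp only [pow_zero, Function.iterate_one, Nat.cast_one, Finset.Icc_self,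
      Finset.prod_singleton]
    show (x (m - 1) + 1) * x m + x (m + 1) = _
    norm_num
  | succ k ih =>
    have h2 : (2 : ℕ) ^ (k + 1) = 2 * 2 ^ k := by ring
    rw [h2]
    exact key n (2 ^ k) Nat.one_le_two_pow (fun x m => ih x m) x m
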